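/- Let G be a finite simple graph, let R and S be disjoint subsets of V(G), and let T = R ∪ S. For every T-signature σ_T the following equivalence holds: there exists a valid partial b-coloring of G[T] with k colors whose T-signature is σ_T if and only if there exist an R-signature σ_R and an S-signature σ_S such that the triple (σ_T, σ_R, σ_S) is compatible, there exists a valid partial b-coloring of G[R] with k colors whose R-signature is σ_R, and there exists a valid partial b-coloring of G[S] with k colors whose S-signature is σ_S. -/

import Mathlib

open scoped Classical

namespace BCol

/-- The three possible descriptions of a color class on an equivalence class:
`none`, `contains`, or `demand`. -/
inductive Desc where
  | none
  | contains
  | demand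
deriving DecidableEq

variable {V : Type*}

/-- The neighborhood of `v` outside of `U`, i.e. `N_G(v) \ U`. -/
def extN (G : SimpleGraph V) (U : Set V) (v : V) : Set V := G.neighborSet v \ U

/-- The `~_U`-equivalence class of `u`: the vertices of `U` with the same
neighborhood outside of `U` as `u`. -/
def cls (G : SimpleGraph V) (U : Set V) (u : V) : Set V :=
  {v | v ∈ U ∧ extN G U v = extN G U u}

/-- The set of equivalence classes `U/~_U`. -/
def eqClasses (G : SimpleGraph V) (U : Set V) : Set (Set V) :=
  {Q | ∃ u ∈ U, Q = cls G U u}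

/-- The equivalence classes of `~_U`, as a type. -/
abbrev Classes (G : SimpleGraph V) (U : Set V) := {Q // Q ∈ eqClasses G U}

/-- A `U`-type: a pair of a map `U/~_U → {none, contains, demand}` and a bit. -/
abbrev UType (G : SimpleGraph V) (U : Set V) := (Classes G U → Desc) × Bool

/-- The neighborhood of `v` in the induced subgraph `G[U]`. -/
def indN (G : SimpleGraph V) (U : Set V) (v : V) : Set V := G.neighborSet v ∩ U

/-- `C` is an independent set of the induced subgraph `G[U]`. -/
def IndepIn (G : SimpleGraph V) (U C : Set V) : Prop :=
  C ⊆ U ∧ ∀ u ∈ C, ∀ v ∈ C, ¬ G.Adj u v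

/-- The `desc`-component of the `U`-type of the color class `C` relative to the set `B`
of partial `b`-vertices. -/
noncomputable def descOf (G : SimpleGraph V) (U B C : Set V) (Q : Classes G U) : Desc :=
  if (Q.1 ∩ C).Nonempty then Desc.contains
  else if ∃ v ∈ B ∩ Q.1, indN G U v ∩ C = ∅ then Desc.demand
  else Desc.none

/-- The `U`-type of the color class `C` relative to the set `B` of partial `b`-vertices. -/
noncomputable def typeOf (G : SimpleGraph V) (U B C : Set V) : UType G U :=
  (descOf G U B C, if (C ∩ B).Nonempty then true else false)

/-- `C` is valid relative to `B`: there is no class `Q ∈ U/~_U` intersecting `C` such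
that some `v ∈ B ∩ Q` has closed neighborhood in `G[U]` disjoint from `C`. -/
def ValidClass (G : SimpleGraph V) (U B C : Set V) : Prop :=
  ¬ ∃ Q ∈ eqClasses G U, (Q ∩ C).Nonempty ∧
      ∃ v ∈ B ∩ Q, (insert v (indN G U v)) ∩ C = ∅

/-- `Q_R Q_S ∈ E(H)`: every vertex of `Q_R` is adjacent to every vertex of `Q_S`. -/
def OpEdge (G : SimpleGraph V) (QR QS : Set V) : Prop :=
  ∀ u ∈ QR, ∀ v ∈ QS, G.Adj u v

/-- An `R`-type `ρ` and an `S`-type `σ` are compatible. -/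
def CompatibleTypes (G : SimpleGraph V) (R S : Set V)
    (ρ : UType G R) (σ : UType G S) : Prop :=
  (¬ (ρ.2 = true ∧ σ.2 = true)) ∧
  (¬ ∃ (QR : Classes G R) (QS : Classes G S),
      OpEdge G QR.1 QS.1 ∧ ρ.1 QR = Desc.contains ∧ σ.1 QS = Desc.contains) ∧
  (∀ Q : Classes G (R ∪ S),
    ((∃ QR : Classes G R, QR.1 ⊆ Q.1 ∧ ρ.1 QR = Desc.contains) ∨
     (∃ QS : Classes G S, QS.1 ⊆ Q.1 ∧ σ.1 QS = Desc.contains)) →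
    ((∀ QR : Classes G R, QR.1 ⊆ Q.1 → ρ.1 QR = Desc.demand →
        ∃ QS : Classes G S, σ.1 QS = Desc.contains ∧ OpEdge G QR.1 QS.1) ∧
     (∀ QS : Classes G S, QS.1 ⊆ Q.1 → σ.1 QS = Desc.demand →
        ∃ QR : Classes G R, ρ.1 QR = Desc.contains ∧ OpEdge G QR.1 QS.1)))

/-- The merge type of an `R`-type `ρ` and an `S`-type `σ`. -/
noncomputable def mergeType (G : SimpleGraph V) (R S : Set V)
    (ρ : UType G R) (σ : UType G S) : UType G (R ∪ S) :=
  (fun Q =>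
    if (∃ QR : Classes G R, QR.1 ⊆ Q.1 ∧ ρ.1 QR = Desc.contains) ∨
       (∃ QS : Classes G S, QS.1 ⊆ Q.1 ∧ σ.1 QS = Desc.contains) then
      Desc.contains
    else if (∃ QR : Classes G R, QR.1 ⊆ Q.1 ∧ ρ.1 QR = Desc.demand ∧
              ∀ QS : Classes G S, OpEdge G QR.1 QS.1 → σ.1 QS ≠ Desc.contains) ∨
            (∃ QS : Classes G S, QS.1 ⊆ Q.1 ∧ σ.1 QS = Desc.demand ∧
              ∀ QR : Classes G R, OpEdge G QR.1 QS.1 → ρ.1 QR ≠ Desc.contains) then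
      Desc.demand
    else Desc.none,
   ρ.2 || σ.2)

/-- `((C_1, …, C_k), B)` is a partial `b`-coloring of `G[U]` with `k` colors:
the `C_i` partition `U` into independent sets of `G[U]`, `B ⊆ U`, and each color class
contains at most one vertex of `B`. -/
def IsPartialBColoring (G : SimpleGraph V) (U : Set V) {k : ℕ}
    (C : Fin k → Set V) (B : Set V) : Prop :=
  (⋃ i, C i) = U ∧ (Pairwise fun i j => Disjoint (C i) (C j)) ∧
  (∀ i, IndepIn G U (C i)) ∧ B ⊆ U ∧ ∀ i, (C i ∩ B).Subsingleton

/-- A valid partial `b`-coloring of `G[U]`: every color class is valid relative to `B`. -/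
def IsValidPartialBColoring (G : SimpleGraph V) (U : Set V) {k : ℕ}
    (C : Fin k → Set V) (B : Set V) : Prop :=
  IsPartialBColoring G U C B ∧ ∀ i, ValidClass G U B (C i)

/-- The `U`-signature of the partial `b`-coloring `(C, B)`: to each `U`-type `τ` it
assigns the number of color classes whose `U`-type relative to `B` is `τ`. -/
noncomputable def sigOf (G : SimpleGraph V) (U : Set V) {k : ℕ}
    (C : Fin k → Set V) (B : Set V) : UType G U → ℕ :=
  fun τ => Nat.card {i : Fin k // typeOf G U B (C i) = τ}

/-- `σ` is a `U`-signature for `k` colors: the values of `σ` sum up to `k`. -/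
def IsSignature (G : SimpleGraph V) (U : Set V) (k : ℕ) (σ : UType G U → ℕ) : Prop :=
  ∑ᶠ τ, σ τ = k

/-- A triple `(σT, σR, σS)` of signatures is compatible: there is an assignment `f` of
natural numbers to the edges of the merge skeleton (i.e. to the compatible pairs of an
`R`-type and an `S`-type) such that the sums of `f` over the edges incident to each
`R`-type `ρ`, to each `S`-type `σ`, and over the edges labeled by each merge type `τ`
are `σR ρ`, `σS σ`, and `σT τ`, respectively. -/
def CompatibleSignatures (G : SimpleGraph V) (R S : Set V)
    (σT : UType G (R ∪ S) → ℕ) (σR : UType G R → ℕ) (σS : UType G S → ℕ) : Prop :=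
  ∃ f : UType G R × UType G S → ℕ,
    (∀ p, ¬ CompatibleTypes G R S p.1 p.2 → f p = 0) ∧
    (∀ ρ, ∑ᶠ σ, f (ρ, σ) = σR ρ) ∧
    (∀ σ, ∑ᶠ ρ, f (ρ, σ) = σS σ) ∧
    (∀ τ, ∑ᶠ p ∈ {p : UType G R × UType G S | mergeType G R S p.1 p.2 = τ}, f p = σT τ)

/-! ### Auxiliary material for the proof -/

instance : Fintype Desc :=
  ⟨{Desc.none, Desc.contains, Desc.demand}, by intro x; cases x <;> simp⟩

section Aux

variable {V : Type*} {G : SimpleGraph V} {R S U B C BR BS CR CS : Set V} {u v w : V}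

lemma mem_cls_self (hu : u ∈ U) : u ∈ cls G U u := ⟨hu, rfl⟩

lemma cls_eq_of_mem (hv : v ∈ cls G U u) : cls G U v = cls G U u := by
  simp only [cls, hv.2]

lemma eq_cls_of_mem {Q : Set V} (hQ : Q ∈ eqClasses G U) (hv : v ∈ Q) :
    Q = cls G U v := by
  obtain ⟨u, hu, rfl⟩ := hQ
  exact (cls_eq_of_mem hv).symm

lemma extN_union_left (x : V) : extN G (R ∪ S) x = extN G R x \ S := by
  simp only [extN, Set.diff_diff]

lemma extN_union_right (x : V) : extN G (R ∪ S) x = extN G S x \ R := by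
  simp only [extN, Set.diff_diff, Set.union_comm S R]

lemma cls_subset_left : cls G R u ⊆ cls G (R ∪ S) u := by
  intro v hv
  exact ⟨Or.inl hv.1, by rw [extN_union_left, extN_union_left, hv.2]⟩

lemma cls_subset_right : cls G S u ⊆ cls G (R ∪ S) u := by
  intro v hv
  exact ⟨Or.inr hv.1, by rw [extN_union_right, extN_union_right, hv.2]⟩

lemma adj_of_mem_cls (hRS : Disjoint R S) {u u' v : V} (hu' : u' ∈ cls G R u)
    (hv : v ∈ S) (h : G.Adj u v) : G.Adj u' v := by
  have hvm : v ∈ extN G R u := ⟨h, Set.disjoint_right.mp hRS hv⟩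
  rw [← hu'.2] at hvm
  exact hvm.1

lemma opEdge_of_adj (hRS : Disjoint R S) {u v : V} (hu : u ∈ R) (hv : v ∈ S)
    (h : G.Adj u v) : OpEdge G (cls G R u) (cls G S v) := by
  intro u' hu' v' hv'
  have h1 : G.Adj u' v := adj_of_mem_cls hRS hu' hv h
  have h2 : G.Adj v' u' := adj_of_mem_cls hRS.symm hv' hu'.1 h1.symm
  exact h2.symm

lemma typeOf_fst : (typeOf G U B C).1 = descOf G U B C := rfl

lemma typeOf_snd : (typeOf G U B C).2 = (if (C ∩ B).Nonempty then true else false) := rfl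

lemma bit_true : (typeOf G U B C).2 = true ↔ (C ∩ B).Nonempty := by
  rw [typeOf_snd]; split_ifs with h <;> simp [h]

lemma descOf_eq_contains {Q : Classes G U} :
    descOf G U B C Q = Desc.contains ↔ (Q.1 ∩ C).Nonempty := by
  unfold descOf
  by_cases h1 : (Q.1 ∩ C).Nonempty
  · rw [if_pos h1]; exact iff_of_true rfl h1
  · rw [if_neg h1]
    refine iff_of_false ?_ h1
    split_ifs <;> simp

lemma descOf_eq_demand {Q : Classes G U} :
    descOf G U B C Q = Desc.demand ↔
      (¬(Q.1 ∩ C).Nonempty ∧ ∃ v ∈ B ∩ Q.1, indN G U v ∩ C = ∅) := by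
  unfold descOf
  by_cases h1 : (Q.1 ∩ C).Nonempty
  · rw [if_pos h1]; simp [h1]
  · rw [if_neg h1]
    by_cases h2 : ∃ v ∈ B ∩ Q.1, indN G U v ∩ C = ∅
    · rw [if_pos h2]; exact iff_of_true rfl ⟨h1, h2⟩
    · rw [if_neg h2]; exact iff_of_false (by simp) fun h => h2 h.2

lemma containsT_iff (hCR : CR ⊆ R) (hCS : CS ⊆ S) (Q : Classes G (R ∪ S)) :
    (Q.1 ∩ (CR ∪ CS)).Nonempty ↔
      ((∃ QR : Classes G R, QR.1 ⊆ Q.1 ∧ descOf G R BR CR QR = Desc.contains) ∨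
       (∃ QS : Classes G S, QS.1 ⊆ Q.1 ∧ descOf G S BS CS QS = Desc.contains)) := by
  constructor
  · rintro ⟨x, hxQ, hxC⟩
    have hQx : Q.1 = cls G (R ∪ S) x := eq_cls_of_mem Q.2 hxQ
    rcases hxC with hx | hx
    · exact Or.inl ⟨⟨cls G R x, ⟨x, hCR hx, rfl⟩⟩, by rw [hQx]; exact cls_subset_left,
        descOf_eq_contains.mpr ⟨x, mem_cls_self (hCR hx), hx⟩⟩
    · exact Or.inr ⟨⟨cls G S x, ⟨x, hCS hx, rfl⟩⟩, by rw [hQx]; exact cls_subset_right,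
        descOf_eq_contains.mpr ⟨x, mem_cls_self (hCS hx), hx⟩⟩
  · rintro (⟨QR, hsub, hc⟩ | ⟨QS, hsub, hc⟩)
    · obtain ⟨x, hxQ, hxC⟩ := descOf_eq_contains.mp hc
      exact ⟨x, hsub hxQ, Or.inl hxC⟩
    · obtain ⟨x, hxQ, hxC⟩ := descOf_eq_contains.mp hc
      exact ⟨x, hsub hxQ, Or.inr hxC⟩

lemma demandT_iff (hRS : Disjoint R S) (hCR : CR ⊆ R) (hCS : CS ⊆ S)
    (hBR : BR ⊆ R) (hBS : BS ⊆ S) (Q : Classes G (R ∪ S))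
    (hnc : ¬(Q.1 ∩ (CR ∪ CS)).Nonempty) :
    (∃ v ∈ (BR ∪ BS) ∩ Q.1, indN G (R ∪ S) v ∩ (CR ∪ CS) = ∅) ↔
      ((∃ QR : Classes G R, QR.1 ⊆ Q.1 ∧ descOf G R BR CR QR = Desc.demand ∧
          ∀ QS : Classes G S, OpEdge G QR.1 QS.1 → descOf G S BS CS QS ≠ Desc.contains) ∨
       (∃ QS : Classes G S, QS.1 ⊆ Q.1 ∧ descOf G S BS CS QS = Desc.demand ∧
          ∀ QR : Classes G R, OpEdge G QR.1 QS.1 → descOf G R BR CR QR ≠ Desc.contains)) := by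
  constructor
  · rintro ⟨v, ⟨hvB, hvQ⟩, hind⟩
    have hQv : Q.1 = cls G (R ∪ S) v := eq_cls_of_mem Q.2 hvQ
    have hindm := Set.eq_empty_iff_forall_notMem.mp hind
    rcases hvB with hv | hv
    · have hvR : v ∈ R := hBR hv
      refine Or.inl ⟨⟨cls G R v, ⟨v, hvR, rfl⟩⟩, by rw [hQv]; exact cls_subset_left, ?_, ?_⟩
      · refine descOf_eq_demand.mpr ⟨?_, v, ⟨hv, mem_cls_self hvR⟩, ?_⟩
        · rintro ⟨x, hx1, hx2⟩
          exact hnc ⟨x, by rw [hQv]; exact cls_subset_left hx1, Or.inl hx2⟩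
        · rw [Set.eq_empty_iff_forall_notMem]
          rintro x ⟨⟨hadj, hxR⟩, hxC⟩
          exact hindm x ⟨⟨hadj, Or.inl hxR⟩, Or.inl hxC⟩
      · rintro QS hop hc
        obtain ⟨x, hxQ, hxC⟩ := descOf_eq_contains.mp hc
        have hadj : G.Adj v x := hop v (mem_cls_self hvR) x hxQ
        exact hindm x ⟨⟨hadj, Or.inr (hCS hxC)⟩, Or.inr hxC⟩
    · have hvS : v ∈ S := hBS hv
      refine Or.inr ⟨⟨cls G S v, ⟨v, hvS, rfl⟩⟩, by rw [hQv]; exact cls_subset_right, ?_, ?_⟩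
      · refine descOf_eq_demand.mpr ⟨?_, v, ⟨hv, mem_cls_self hvS⟩, ?_⟩
        · rintro ⟨x, hx1, hx2⟩
          exact hnc ⟨x, by rw [hQv]; exact cls_subset_right hx1, Or.inr hx2⟩
        · rw [Set.eq_empty_iff_forall_notMem]
          rintro x ⟨⟨hadj, hxS⟩, hxC⟩
          exact hindm x ⟨⟨hadj, Or.inr hxS⟩, Or.inr hxC⟩
      · rintro QR hop hc
        obtain ⟨x, hxQ, hxC⟩ := descOf_eq_contains.mp hc
        have hadj : G.Adj v x := (hop x hxQ v (mem_cls_self hvS)).symm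
        exact hindm x ⟨⟨hadj, Or.inl (hCR hxC)⟩, Or.inl hxC⟩
  · rintro (⟨QR, hsub, hdem, hno⟩ | ⟨QS, hsub, hdem, hno⟩)
    · obtain ⟨hempty, v, ⟨hvB, hvQ⟩, hvind⟩ := descOf_eq_demand.mp hdem
      have hQR : QR.1 = cls G R v := eq_cls_of_mem QR.2 hvQ
      have hvR : v ∈ R := hBR hvB
      refine ⟨v, ⟨Or.inl hvB, hsub hvQ⟩, ?_⟩
      rw [Set.eq_empty_iff_forall_notMem]
      rintro x ⟨⟨hadj, hxT⟩, hxC⟩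
      rcases hxC with hx | hx
      · have : x ∈ indN G R v ∩ CR := ⟨⟨hadj, hCR hx⟩, hx⟩
        rw [hvind] at this
        exact this
      · have hxS : x ∈ S := hCS hx
        have hop : OpEdge G QR.1 (cls G S x) := by
          rw [hQR]; exact opEdge_of_adj hRS hvR hxS hadj
        exact hno ⟨cls G S x, ⟨x, hxS, rfl⟩⟩ hop
          (descOf_eq_contains.mpr ⟨x, mem_cls_self hxS, hx⟩)
    · obtain ⟨hempty, v, ⟨hvB, hvQ⟩, hvind⟩ := descOf_eq_demand.mp hdem
      have hQS : QS.1 = cls G S v := eq_cls_of_mem QS.2 hvQ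
      have hvS : v ∈ S := hBS hvB
      refine ⟨v, ⟨Or.inr hvB, hsub hvQ⟩, ?_⟩
      rw [Set.eq_empty_iff_forall_notMem]
      rintro x ⟨⟨hadj, hxT⟩, hxC⟩
      rcases hxC with hx | hx
      · have hxR : x ∈ R := hCR hx
        have hop : OpEdge G (cls G R x) QS.1 := by
          rw [hQS]; exact opEdge_of_adj hRS hxR hvS hadj.symm
        exact hno ⟨cls G R x, ⟨x, hxR, rfl⟩⟩ hop
          (descOf_eq_contains.mpr ⟨x, mem_cls_self hxR, hx⟩)
      · have : x ∈ indN G S v ∩ CS := ⟨⟨hadj, hCS hx⟩, hx⟩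
        rw [hvind] at this
        exact this

lemma merge_typeOf (hRS : Disjoint R S) (hCR : CR ⊆ R) (hCS : CS ⊆ S)
    (hBR : BR ⊆ R) (hBS : BS ⊆ S) :
    typeOf G (R ∪ S) (BR ∪ BS) (CR ∪ CS) =
      mergeType G R S (typeOf G R BR CR) (typeOf G S BS CS) := by
  have hfst : ∀ p : UType G R, p.1 = p.1 := fun _ => rfl
  refine Prod.ext ?_ ?_
  · funext Q
    show descOf G (R ∪ S) (BR ∪ BS) (CR ∪ CS) Q = _
    rw [mergeType]
    simp only [typeOf_fst]
    rw [descOf]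
    by_cases h1 : (Q.1 ∩ (CR ∪ CS)).Nonempty
    · rw [if_pos h1]; exact (if_pos ((containsT_iff (BR := BR) (BS := BS) hCR hCS Q).mp h1)).symm
    · rw [if_neg h1]
      refine Eq.trans ?_ (if_neg ((containsT_iff (BR := BR) (BS := BS) hCR hCS Q).not.mp h1)).symm
      by_cases h2 : ∃ v ∈ (BR ∪ BS) ∩ Q.1, indN G (R ∪ S) v ∩ (CR ∪ CS) = ∅
      · rw [if_pos h2]; exact (if_pos ((demandT_iff hRS hCR hCS hBR hBS Q h1).mp h2)).symm
      · rw [if_neg h2]; exact (if_neg ((demandT_iff hRS hCR hCS hBR hBS Q h1).not.mp h2)).symm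
  · show (if ((CR ∪ CS) ∩ (BR ∪ BS)).Nonempty then true else false) = _
    rw [mergeType]
    simp only [typeOf_snd]
    have hiff : ((CR ∪ CS) ∩ (BR ∪ BS)).Nonempty ↔
        (CR ∩ BR).Nonempty ∨ (CS ∩ BS).Nonempty := by
      constructor
      · rintro ⟨x, hxC | hxC, hxB | hxB⟩
        · exact Or.inl ⟨x, hxC, hxB⟩
        · exact absurd (hBS hxB) (Set.disjoint_left.mp hRS (hCR hxC))
        · exact absurd (hBR hxB) (Set.disjoint_right.mp hRS (hCS hxC))
        · exact Or.inr ⟨x, hxC, hxB⟩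
      · rintro (⟨x, h1, h2⟩ | ⟨x, h1, h2⟩)
        · exact ⟨x, Or.inl h1, Or.inl h2⟩
        · exact ⟨x, Or.inr h1, Or.inr h2⟩
    by_cases hA : (CR ∩ BR).Nonempty <;> by_cases hB : (CS ∩ BS).Nonempty <;>
      simp [hA, hB, hiff]

lemma compat_typeOf (hRS : Disjoint R S) (hCR : CR ⊆ R) (hCS : CS ⊆ S)
    (hBR : BR ⊆ R) (hBS : BS ⊆ S)
    (hind : ∀ u ∈ CR ∪ CS, ∀ v ∈ CR ∪ CS, ¬ G.Adj u v)
    (hsub : ((CR ∪ CS) ∩ (BR ∪ BS)).Subsingleton)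
    (hval : ValidClass G (R ∪ S) (BR ∪ BS) (CR ∪ CS)) :
    CompatibleTypes G R S (typeOf G R BR CR) (typeOf G S BS CS) := by
  refine ⟨?_, ?_, ?_⟩
  · rintro ⟨h1, h2⟩
    obtain ⟨x, hx1, hx2⟩ := bit_true.mp h1
    obtain ⟨y, hy1, hy2⟩ := bit_true.mp h2
    have hxy : x = y := hsub ⟨Or.inl hx1, Or.inl hx2⟩ ⟨Or.inr hy1, Or.inr hy2⟩
    exact Set.disjoint_left.mp hRS (hCR hx1) (hxy ▸ hCS hy1)
  · rintro ⟨QR, QS, hop, hcR, hcS⟩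
    obtain ⟨x, hx1, hx2⟩ := descOf_eq_contains.mp hcR
    obtain ⟨y, hy1, hy2⟩ := descOf_eq_contains.mp hcS
    exact hind x (Or.inl hx2) y (Or.inr hy2) (hop x hx1 y hy1)
  · intro Q hcont
    have hQC : (Q.1 ∩ (CR ∪ CS)).Nonempty :=
      (containsT_iff (BR := BR) (BS := BS) hCR hCS Q).mpr hcont
    constructor
    · intro QR hsubQ hdem
      obtain ⟨hemp, v, ⟨hvB, hvQ⟩, hvind⟩ := descOf_eq_demand.mp hdem
      have hvR : v ∈ R := hBR hvB
      have hQRv : QR.1 = cls G R v := eq_cls_of_mem QR.2 hvQ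
      by_contra hno
      push_neg at hno
      apply hval
      refine ⟨Q.1, Q.2, hQC, v, ⟨Or.inl hvB, hsubQ hvQ⟩, ?_⟩
      rw [Set.eq_empty_iff_forall_notMem]
      rintro x ⟨hx, hxC⟩
      rcases Set.mem_insert_iff.mp hx with rfl | ⟨hadj, hxT⟩
      · rcases hxC with h | h
        · exact hemp ⟨x, hvQ, h⟩
        · exact Set.disjoint_left.mp hRS hvR (hCS h)
      · rcases hxC with h | h
        · have : x ∈ indN G R v ∩ CR := ⟨⟨hadj, hCR h⟩, h⟩
          rw [hvind] at this; exact this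
        · have hop : OpEdge G QR.1 (cls G S x) := by
            rw [hQRv]; exact opEdge_of_adj hRS hvR (hCS h) hadj
          exact hno ⟨cls G S x, ⟨x, hCS h, rfl⟩⟩
            (descOf_eq_contains.mpr ⟨x, mem_cls_self (hCS h), h⟩) hop
    · intro QS hsubQ hdem
      obtain ⟨hemp, v, ⟨hvB, hvQ⟩, hvind⟩ := descOf_eq_demand.mp hdem
      have hvS : v ∈ S := hBS hvB
      have hQSv : QS.1 = cls G S v := eq_cls_of_mem QS.2 hvQ
      by_contra hno
      push_neg at hno
      apply hval
      refine ⟨Q.1, Q.2, hQC, v, ⟨Or.inr hvB, hsubQ hvQ⟩, ?_⟩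
      rw [Set.eq_empty_iff_forall_notMem]
      rintro x ⟨hx, hxC⟩
      rcases Set.mem_insert_iff.mp hx with rfl | ⟨hadj, hxT⟩
      · rcases hxC with h | h
        · exact Set.disjoint_right.mp hRS hvS (hCR h)
        · exact hemp ⟨x, hvQ, h⟩
      · rcases hxC with h | h
        · have hop : OpEdge G (cls G R x) QS.1 := by
            rw [hQSv]; exact opEdge_of_adj hRS (hCR h) hvS hadj.symm
          exact hno ⟨cls G R x, ⟨x, hCR h, rfl⟩⟩
            (descOf_eq_contains.mpr ⟨x, mem_cls_self (hCR h), h⟩) hop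
        · have : x ∈ indN G S v ∩ CS := ⟨⟨hadj, hCS h⟩, h⟩
          rw [hvind] at this; exact this

lemma valid_left (hRS : Disjoint R S) (hCR : CR ⊆ R) (hCS : CS ⊆ S) (hBR : BR ⊆ R)
    (hind : ∀ u ∈ CR ∪ CS, ∀ v ∈ CR ∪ CS, ¬ G.Adj u v)
    (hval : ValidClass G (R ∪ S) (BR ∪ BS) (CR ∪ CS)) : ValidClass G R BR CR := by
  rintro ⟨Q, hQ, ⟨w, hwQ, hwC⟩, v, ⟨hvB, hvQ⟩, hvemp⟩
  have hQv : Q = cls G R v := eq_cls_of_mem hQ hvQ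
  have hvR : v ∈ R := hBR hvB
  have hwv : w ∈ cls G R v := by rw [← hQv]; exact hwQ
  have hvemp' := Set.eq_empty_iff_forall_notMem.mp hvemp
  apply hval
  refine ⟨cls G (R ∪ S) v, ⟨v, Or.inl hvR, rfl⟩, ⟨w, cls_subset_left hwv, Or.inl hwC⟩,
    v, ⟨Or.inl hvB, mem_cls_self (Or.inl hvR)⟩, ?_⟩
  rw [Set.eq_empty_iff_forall_notMem]
  rintro x ⟨hx, hxC⟩
  rcases Set.mem_insert_iff.mp hx with rfl | ⟨hadj, hxT⟩
  · rcases hxC with h | h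
    · exact hvemp' x ⟨Set.mem_insert _ _, h⟩
    · exact Set.disjoint_left.mp hRS hvR (hCS h)
  · rcases hxC with h | h
    · exact hvemp' x ⟨Set.mem_insert_of_mem _ ⟨hadj, hCR h⟩, h⟩
    · exact hind w (Or.inl hwC) x (Or.inr h) (adj_of_mem_cls hRS hwv (hCS h) hadj)

lemma valid_right (hRS : Disjoint R S) (hCR : CR ⊆ R) (hCS : CS ⊆ S) (hBS : BS ⊆ S)
    (hind : ∀ u ∈ CR ∪ CS, ∀ v ∈ CR ∪ CS, ¬ G.Adj u v)
    (hval : ValidClass G (R ∪ S) (BR ∪ BS) (CR ∪ CS)) : ValidClass G S BS CS := by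
  rintro ⟨Q, hQ, ⟨w, hwQ, hwC⟩, v, ⟨hvB, hvQ⟩, hvemp⟩
  have hQv : Q = cls G S v := eq_cls_of_mem hQ hvQ
  have hvS : v ∈ S := hBS hvB
  have hwv : w ∈ cls G S v := by rw [← hQv]; exact hwQ
  have hvemp' := Set.eq_empty_iff_forall_notMem.mp hvemp
  apply hval
  refine ⟨cls G (R ∪ S) v, ⟨v, Or.inr hvS, rfl⟩, ⟨w, cls_subset_right hwv, Or.inr hwC⟩,
    v, ⟨Or.inr hvB, mem_cls_self (Or.inr hvS)⟩, ?_⟩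
  rw [Set.eq_empty_iff_forall_notMem]
  rintro x ⟨hx, hxC⟩
  rcases Set.mem_insert_iff.mp hx with rfl | ⟨hadj, hxT⟩
  · rcases hxC with h | h
    · exact Set.disjoint_right.mp hRS hvS (hCR h)
    · exact hvemp' x ⟨Set.mem_insert _ _, h⟩
  · rcases hxC with h | h
    · exact hind w (Or.inr hwC) x (Or.inl h) (adj_of_mem_cls hRS.symm hwv (hCR h) hadj)
    · exact hvemp' x ⟨Set.mem_insert_of_mem _ ⟨hadj, hCS h⟩, h⟩

lemma valid_union (hRS : Disjoint R S) (hCR : CR ⊆ R) (hCS : CS ⊆ S)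
    (hBR : BR ⊆ R) (hBS : BS ⊆ S)
    (hcomp : CompatibleTypes G R S (typeOf G R BR CR) (typeOf G S BS CS))
    (hvR : ValidClass G R BR CR) (hvS : ValidClass G S BS CS) :
    ValidClass G (R ∪ S) (BR ∪ BS) (CR ∪ CS) := by
  rintro ⟨Q, hQ, hQC, v, ⟨hvB, hvQ⟩, hvemp⟩
  have hQv : Q = cls G (R ∪ S) v := eq_cls_of_mem hQ hvQ
  have hvemp' := Set.eq_empty_iff_forall_notMem.mp hvemp
  have hcont : (∃ QR : Classes G R, QR.1 ⊆ Q ∧ descOf G R BR CR QR = Desc.contains) ∨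
      (∃ QS : Classes G S, QS.1 ⊆ Q ∧ descOf G S BS CS QS = Desc.contains) :=
    (containsT_iff (BR := BR) (BS := BS) hCR hCS ⟨Q, hQ⟩).mp hQC
  rcases hvB with hv | hv
  · have hvR' : v ∈ R := hBR hv
    have h2 : indN G R v ∩ CR = ∅ := by
      rw [Set.eq_empty_iff_forall_notMem]
      rintro x ⟨⟨hadj, hxR⟩, hxC⟩
      exact hvemp' x ⟨Set.mem_insert_of_mem _ ⟨hadj, Or.inl hxR⟩, Or.inl hxC⟩
    have h1 : ¬ (cls G R v ∩ CR).Nonempty := by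
      rintro ⟨x, hx1, hx2⟩
      apply hvR
      refine ⟨cls G R v, ⟨v, hvR', rfl⟩, ⟨x, hx1, hx2⟩, v, ⟨hv, mem_cls_self hvR'⟩, ?_⟩
      rw [Set.eq_empty_iff_forall_notMem]
      rintro y ⟨hy, hyC⟩
      rcases Set.mem_insert_iff.mp hy with rfl | hy'
      · exact hvemp' y ⟨Set.mem_insert _ _, Or.inl hyC⟩
      · have : y ∈ indN G R v ∩ CR := ⟨hy', hyC⟩
        rw [h2] at this; exact this
    have hdem : descOf G R BR CR ⟨cls G R v, ⟨v, hvR', rfl⟩⟩ = Desc.demand :=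
      descOf_eq_demand.mpr ⟨h1, v, ⟨hv, mem_cls_self hvR'⟩, h2⟩
    obtain ⟨QS, hcS, hop⟩ := (hcomp.2.2 ⟨Q, hQ⟩ hcont).1 ⟨cls G R v, ⟨v, hvR', rfl⟩⟩
      (fun x hx => show x ∈ Q from hQv.symm ▸ (cls_subset_left hx : x ∈ cls G (R ∪ S) v)) hdem
    obtain ⟨x, hx1, hx2⟩ := descOf_eq_contains.mp hcS
    have hadj : G.Adj v x := hop v (mem_cls_self hvR') x hx1
    exact hvemp' x ⟨Set.mem_insert_of_mem _ ⟨hadj, Or.inr (hCS hx2)⟩, Or.inr hx2⟩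
  · have hvS' : v ∈ S := hBS hv
    have h2 : indN G S v ∩ CS = ∅ := by
      rw [Set.eq_empty_iff_forall_notMem]
      rintro x ⟨⟨hadj, hxS⟩, hxC⟩
      exact hvemp' x ⟨Set.mem_insert_of_mem _ ⟨hadj, Or.inr hxS⟩, Or.inr hxC⟩
    have h1 : ¬ (cls G S v ∩ CS).Nonempty := by
      rintro ⟨x, hx1, hx2⟩
      apply hvS
      refine ⟨cls G S v, ⟨v, hvS', rfl⟩, ⟨x, hx1, hx2⟩, v, ⟨hv, mem_cls_self hvS'⟩, ?_⟩
      rw [Set.eq_empty_iff_forall_notMem]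
      rintro y ⟨hy, hyC⟩
      rcases Set.mem_insert_iff.mp hy with rfl | hy'
      · exact hvemp' y ⟨Set.mem_insert _ _, Or.inr hyC⟩
      · have : y ∈ indN G S v ∩ CS := ⟨hy', hyC⟩
        rw [h2] at this; exact this
    have hdem : descOf G S BS CS ⟨cls G S v, ⟨v, hvS', rfl⟩⟩ = Desc.demand :=
      descOf_eq_demand.mpr ⟨h1, v, ⟨hv, mem_cls_self hvS'⟩, h2⟩
    obtain ⟨QR, hcR, hop⟩ := (hcomp.2.2 ⟨Q, hQ⟩ hcont).2 ⟨cls G S v, ⟨v, hvS', rfl⟩⟩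
      (fun x hx => show x ∈ Q from hQv.symm ▸ (cls_subset_right hx : x ∈ cls G (R ∪ S) v)) hdem
    obtain ⟨x, hx1, hx2⟩ := descOf_eq_contains.mp hcR
    have hadj : G.Adj v x := (hop x hx1 v (mem_cls_self hvS')).symm
    exact hvemp' x ⟨Set.mem_insert_of_mem _ ⟨hadj, Or.inl (hCR hx2)⟩, Or.inl hx2⟩

lemma indep_union (hRS : Disjoint R S) (hCR : CR ⊆ R) (hCS : CS ⊆ S)
    (hiR : ∀ u ∈ CR, ∀ v ∈ CR, ¬ G.Adj u v) (hiS : ∀ u ∈ CS, ∀ v ∈ CS, ¬ G.Adj u v)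
    (hcomp : CompatibleTypes G R S (typeOf G R BR CR) (typeOf G S BS CS)) :
    ∀ u ∈ CR ∪ CS, ∀ v ∈ CR ∪ CS, ¬ G.Adj u v := by
  have cross : ∀ u ∈ CR, ∀ v ∈ CS, ¬ G.Adj u v := by
    intro u hu v hv hadj
    exact hcomp.2.1 ⟨⟨cls G R u, ⟨u, hCR hu, rfl⟩⟩, ⟨cls G S v, ⟨v, hCS hv, rfl⟩⟩,
      opEdge_of_adj hRS (hCR hu) (hCS hv) hadj,
      descOf_eq_contains.mpr ⟨u, mem_cls_self (hCR hu), hu⟩,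
      descOf_eq_contains.mpr ⟨v, mem_cls_self (hCS hv), hv⟩⟩
  rintro u (hu | hu) v (hv | hv) hadj
  exacts [hiR u hu v hv hadj, cross u hu v hv hadj, cross v hv u hu hadj.symm,
    hiS u hu v hv hadj]

end Aux

section Counting

lemma card_fiber_sum {α β γ : Type*} [Fintype α] [Finite β] (g : α → β) (h : β → γ)
    (c : γ) :
    ∑ᶠ b ∈ {b | h b = c}, Nat.card {a // g a = b} = Nat.card {a // h (g a) = c} := by
  haveI := Fintype.ofFinite β
  have hset : {b | h b = c} = (↑(Finset.univ.filter fun b => h b = c) : Set β) := by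
    ext b; simp
  rw [hset, finsum_mem_coe_finset, Nat.card_eq_fintype_card, Fintype.card_subtype,
    Finset.card_eq_sum_card_fiberwise (f := g)
      (t := Finset.univ.filter fun b => h b = c)
      (fun a ha => by simp only [Finset.mem_coe, Finset.mem_filter, Finset.mem_univ, true_and] at ha ⊢
                      exact ha)]
  refine Finset.sum_congr rfl fun b hb => ?_
  have hbc : h b = c := by simpa using hb
  rw [Nat.card_eq_fintype_card, Fintype.card_subtype, Finset.filter_filter]
  congr 1
  ext a
  simp only [Finset.mem_filter, Finset.mem_univ, true_and]
  constructor
  · intro hab; exact ⟨by rw [hab, hbc], hab⟩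
  · exact And.right

lemma card_fiber_total {α β : Type*} [Fintype α] [Finite β] (g : α → β) :
    ∑ᶠ b, Nat.card {a // g a = b} = Fintype.card α := by
  haveI := Fintype.ofFinite β
  rw [← finsum_mem_univ, ← Finset.coe_univ, finsum_mem_coe_finset,
    show Fintype.card α = Finset.univ.card from (Finset.card_univ).symm,
    Finset.card_eq_sum_card_fiberwise (f := g) (t := Finset.univ)
      (fun a _ => Finset.mem_univ _)]
  refine Finset.sum_congr rfl fun b _ => ?_
  rw [Nat.card_eq_fintype_card, Fintype.card_subtype]

lemma finsum_fst {A B : Type*} (F : A × B → ℕ) (ρ : A) :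
    ∑ᶠ p ∈ {p : A × B | p.1 = ρ}, F p = ∑ᶠ σ : B, F (ρ, σ) := by
  rw [show {p : A × B | p.1 = ρ} = (fun σ : B => (ρ, σ)) '' Set.univ by
      ext ⟨a, b⟩; simp [Prod.ext_iff, eq_comm],
    finsum_mem_image (fun x _ y _ h => congrArg Prod.snd h), finsum_mem_univ]

lemma finsum_snd {A B : Type*} (F : A × B → ℕ) (σ : B) :
    ∑ᶠ p ∈ {p : A × B | p.2 = σ}, F p = ∑ᶠ ρ : A, F (ρ, σ) := by
  rw [show {p : A × B | p.2 = σ} = (fun ρ : A => (ρ, σ)) '' Set.univ by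
      ext ⟨a, b⟩; simp [Prod.ext_iff, eq_comm],
    finsum_mem_image (fun x _ y _ h => congrArg Prod.fst h), finsum_mem_univ]

lemma exists_equiv_comp {α β : Type*} [Fintype α] (a b : α → β)
    (h : ∀ y, Nat.card {x // a x = y} = Nat.card {x // b x = y}) :
    ∃ e : α ≃ α, ∀ x, a x = b (e x) := by
  have F : ∀ y, {x // a x = y} ≃ {x // b x = y} := fun y =>
    Fintype.equivOfCardEq (by
      have hy := h y
      rwa [Nat.card_eq_fintype_card, Nat.card_eq_fintype_card] at hy)
  refine ⟨(Equiv.sigmaFiberEquiv a).symm.trans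
    ((Equiv.sigmaCongrRight F).trans (Equiv.sigmaFiberEquiv b)), fun x => ?_⟩
  exact ((F (a x)) ⟨x, rfl⟩).2.symm

def sigmaFstFiber {ι : Type*} (F : ι → Type*) (p : ι) :
    {y : Σ q, F q // y.1 = p} ≃ F p where
  toFun y := y.2 ▸ y.1.2
  invFun x := ⟨⟨p, x⟩, rfl⟩
  left_inv := by rintro ⟨⟨q, x⟩, rfl⟩; rfl
  right_inv x := rfl

end Counting

/-- Correctness of the dynamic-programming step. Let `R, S` be disjoint vertex subsets
of a finite graph `G` and `T = R ∪ S`. For every `T`-signature `σT`: there is a valid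
partial `b`-coloring of `G[T]` with `k` colors whose `T`-signature is `σT` if and only
if there are an `R`-signature `σR` and an `S`-signature `σS` such that the triple
`(σT, σR, σS)` is compatible, there is a valid partial `b`-coloring of `G[R]` with `k`
colors whose `R`-signature is `σR`, and there is a valid partial `b`-coloring of `G[S]`
with `k` colors whose `S`-signature is `σS`. -/
theorem dp_step_correct {V : Type*} [Fintype V] [DecidableEq V] (G : SimpleGraph V)
    (R S : Set V) (hRS : Disjoint R S) (k : ℕ)
    (σT : UType G (R ∪ S) → ℕ) (hσT : IsSignature G (R ∪ S) k σT) :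
    (∃ (C : Fin k → Set V) (B : Set V),
        IsValidPartialBColoring G (R ∪ S) C B ∧ sigOf G (R ∪ S) C B = σT) ↔
    (∃ (σR : UType G R → ℕ) (σS : UType G S → ℕ),
        IsSignature G R k σR ∧ IsSignature G S k σS ∧
        CompatibleSignatures G R S σT σR σS ∧
        (∃ (C : Fin k → Set V) (B : Set V),
          IsValidPartialBColoring G R C B ∧ sigOf G R C B = σR) ∧
        (∃ (C : Fin k → Set V) (B : Set V),
          IsValidPartialBColoring G S C B ∧ sigOf G S C B = σS)) := by
  classical
  constructor
  · rintro ⟨C, B, ⟨⟨hUn, hDisj, hInd, hBsub, hSub⟩, hVal⟩, hsig⟩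
    have hCiT : ∀ i, C i ⊆ R ∪ S := fun i => by rw [← hUn]; exact Set.subset_iUnion C i
    have hCsplit : ∀ i, (C i ∩ R) ∪ (C i ∩ S) = C i := fun i => by
      rw [← Set.inter_union_distrib_left, Set.inter_eq_left.mpr (hCiT i)]
    have hBsplit : (B ∩ R) ∪ (B ∩ S) = B := by
      rw [← Set.inter_union_distrib_left, Set.inter_eq_left.mpr hBsub]
    set tR : Fin k → UType G R := fun i => typeOf G R (B ∩ R) (C i ∩ R) with htR
    set tS : Fin k → UType G S := fun i => typeOf G S (B ∩ S) (C i ∩ S) with htS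
    have key : ∀ i, ValidClass G R (B ∩ R) (C i ∩ R) ∧ ValidClass G S (B ∩ S) (C i ∩ S) ∧
        CompatibleTypes G R S (tR i) (tS i) ∧
        typeOf G (R ∪ S) B (C i) = mergeType G R S (tR i) (tS i) := by
      intro i
      have hadj : ∀ u ∈ (C i ∩ R) ∪ (C i ∩ S), ∀ v ∈ (C i ∩ R) ∪ (C i ∩ S),
          ¬ G.Adj u v := by
        rw [hCsplit i]; exact (hInd i).2
      have hval' : ValidClass G (R ∪ S) ((B ∩ R) ∪ (B ∩ S)) ((C i ∩ R) ∪ (C i ∩ S)) := by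
        rw [hCsplit i, hBsplit]; exact hVal i
      have hsub' : (((C i ∩ R) ∪ (C i ∩ S)) ∩ ((B ∩ R) ∪ (B ∩ S))).Subsingleton := by
        rw [hCsplit i, hBsplit]; exact hSub i
      refine ⟨valid_left hRS Set.inter_subset_right Set.inter_subset_right
          Set.inter_subset_right hadj hval',
        valid_right hRS Set.inter_subset_right Set.inter_subset_right
          Set.inter_subset_right hadj hval',
        compat_typeOf hRS Set.inter_subset_right Set.inter_subset_right
          Set.inter_subset_right Set.inter_subset_right hadj hsub' hval', ?_⟩
      conv_lhs => rw [← hCsplit i, ← hBsplit]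
      exact merge_typeOf hRS Set.inter_subset_right Set.inter_subset_right
        Set.inter_subset_right Set.inter_subset_right
    refine ⟨sigOf G R (fun i => C i ∩ R) (B ∩ R), sigOf G S (fun i => C i ∩ S) (B ∩ S),
      ?_, ?_, ?_, ?_, ?_⟩
    · show ∑ᶠ τ, Nat.card {i : Fin k // tR i = τ} = k
      rw [card_fiber_total tR]; simp
    · show ∑ᶠ τ, Nat.card {i : Fin k // tS i = τ} = k
      rw [card_fiber_total tS]; simp
    · refine ⟨fun p => Nat.card {i : Fin k // (tR i, tS i) = p}, ?_, ?_, ?_, ?_⟩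
      · intro p hnc
        haveI : IsEmpty {i : Fin k // (tR i, tS i) = p} := by
          refine ⟨fun x => ?_⟩
          obtain ⟨i, hi⟩ := x
          exact hnc (by rw [← hi]; exact (key i).2.2.1)
        exact Nat.card_of_isEmpty
      · intro ρ
        calc ∑ᶠ σ, Nat.card {i : Fin k // (tR i, tS i) = (ρ, σ)}
            = ∑ᶠ p ∈ {p : UType G R × UType G S | p.1 = ρ},
                Nat.card {i : Fin k // (tR i, tS i) = p} :=
              (finsum_fst (fun p : UType G R × UType G S =>
                Nat.card {i : Fin k // (tR i, tS i) = p}) ρ).symm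
          _ = Nat.card {i : Fin k // (tR i, tS i).1 = ρ} :=
              card_fiber_sum (fun i => (tR i, tS i)) Prod.fst ρ
          _ = sigOf G R (fun i => C i ∩ R) (B ∩ R) ρ := rfl
      · intro σ
        calc ∑ᶠ ρ, Nat.card {i : Fin k // (tR i, tS i) = (ρ, σ)}
            = ∑ᶠ p ∈ {p : UType G R × UType G S | p.2 = σ},
                Nat.card {i : Fin k // (tR i, tS i) = p} :=
              (finsum_snd (fun p : UType G R × UType G S =>
                Nat.card {i : Fin k // (tR i, tS i) = p}) σ).symm
          _ = Nat.card {i : Fin k // (tR i, tS i).2 = σ} :=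
              card_fiber_sum (fun i => (tR i, tS i)) Prod.snd σ
          _ = sigOf G S (fun i => C i ∩ S) (B ∩ S) σ := rfl
      · intro τ
        calc ∑ᶠ p ∈ {p : UType G R × UType G S | mergeType G R S p.1 p.2 = τ},
              Nat.card {i : Fin k // (tR i, tS i) = p}
            = Nat.card {i : Fin k // mergeType G R S (tR i, tS i).1 (tR i, tS i).2 = τ} :=
              card_fiber_sum (fun i => (tR i, tS i)) (fun p => mergeType G R S p.1 p.2) τ
          _ = Nat.card {i : Fin k // typeOf G (R ∪ S) B (C i) = τ} :=
              Nat.card_congr (Equiv.subtypeEquivRight fun i => by rw [(key i).2.2.2])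
          _ = σT τ := congrFun hsig τ
    · refine ⟨fun i => C i ∩ R, B ∩ R, ⟨⟨?_,
        fun i j hij => (hDisj hij).mono Set.inter_subset_left Set.inter_subset_left,
        fun i => ⟨Set.inter_subset_right, fun u hu v hv => (hInd i).2 u hu.1 v hv.1⟩,
        Set.inter_subset_right,
        fun i => (hSub i).anti
          (Set.inter_subset_inter Set.inter_subset_left Set.inter_subset_left)⟩,
        fun i => (key i).1⟩, rfl⟩
      rw [← Set.iUnion_inter, hUn, Set.union_inter_cancel_left]
    · refine ⟨fun i => C i ∩ S, B ∩ S, ⟨⟨?_,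
        fun i j hij => (hDisj hij).mono Set.inter_subset_left Set.inter_subset_left,
        fun i => ⟨Set.inter_subset_right, fun u hu v hv => (hInd i).2 u hu.1 v hv.1⟩,
        Set.inter_subset_right,
        fun i => (hSub i).anti
          (Set.inter_subset_inter Set.inter_subset_left Set.inter_subset_left)⟩,
        fun i => (key i).2.1⟩, rfl⟩
      rw [← Set.iUnion_inter, hUn, Set.union_inter_cancel_right]
  · rintro ⟨σR, σS, hσR, hσS, ⟨f, hf0, hfR, hfS, hfT⟩,
      ⟨CR, BR, ⟨⟨hUnR, hDisjR, hIndR, hBRsub, hSubR⟩, hValR⟩, hsigR⟩,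
      ⟨CS, BS, ⟨⟨hUnS, hDisjS, hIndS, hBSsub, hSubS⟩, hValS⟩, hsigS⟩⟩
    haveI : Fintype (UType G R) := Fintype.ofFinite _
    haveI : Fintype (UType G S) := Fintype.ofFinite _
    have hk : ∑ p : UType G R × UType G S, f p = k := by
      rw [Fintype.sum_prod_type]
      calc ∑ ρ, ∑ σ, f (ρ, σ) = ∑ ρ, σR ρ := by
            refine Finset.sum_congr rfl fun ρ _ => ?_
            rw [← finsum_eq_sum_of_fintype]; exact hfR ρ
        _ = k := by rw [← finsum_eq_sum_of_fintype]; exact hσR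
    obtain ⟨E⟩ : Nonempty (Fin k ≃ Σ p : UType G R × UType G S, Fin (f p)) :=
      ⟨Fintype.equivOfCardEq (by simp [Fintype.card_sigma, hk])⟩
    set c : Fin k → UType G R × UType G S := fun m => (E m).1 with hc
    have hcard_c : ∀ p, Nat.card {m : Fin k // c m = p} = f p := fun p => by
      rw [Nat.card_congr ((Equiv.subtypeEquiv E fun m => Iff.rfl).trans
        (sigmaFstFiber (fun q => Fin (f q)) p))]
      simp
    have hcompat_c : ∀ m, CompatibleTypes G R S (c m).1 (c m).2 := fun m => by
      by_contra hn
      have h0 : f (c m) = 0 := hf0 _ hn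
      exact (h0 ▸ ((E m).2 : Fin (f (c m)))).elim0
    have hfibR : ∀ ρ, Nat.card {m : Fin k // (c m).1 = ρ} =
        Nat.card {i : Fin k // typeOf G R BR (CR i) = ρ} := fun ρ => by
      calc Nat.card {m : Fin k // (c m).1 = ρ}
          = ∑ᶠ p ∈ {p : UType G R × UType G S | p.1 = ρ},
              Nat.card {m : Fin k // c m = p} := (card_fiber_sum c Prod.fst ρ).symm
        _ = ∑ᶠ p ∈ {p : UType G R × UType G S | p.1 = ρ}, f p :=
            finsum_mem_congr rfl fun p _ => hcard_c p
        _ = ∑ᶠ σ, f (ρ, σ) := finsum_fst f ρ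
        _ = σR ρ := hfR ρ
        _ = Nat.card {i : Fin k // typeOf G R BR (CR i) = ρ} := (congrFun hsigR ρ).symm
    have hfibS : ∀ σ, Nat.card {m : Fin k // (c m).2 = σ} =
        Nat.card {j : Fin k // typeOf G S BS (CS j) = σ} := fun σ => by
      calc Nat.card {m : Fin k // (c m).2 = σ}
          = ∑ᶠ p ∈ {p : UType G R × UType G S | p.2 = σ},
              Nat.card {m : Fin k // c m = p} := (card_fiber_sum c Prod.snd σ).symm
        _ = ∑ᶠ p ∈ {p : UType G R × UType G S | p.2 = σ}, f p :=
            finsum_mem_congr rfl fun p _ => hcard_c p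
        _ = ∑ᶠ ρ, f (ρ, σ) := finsum_snd f σ
        _ = σS σ := hfS σ
        _ = Nat.card {j : Fin k // typeOf G S BS (CS j) = σ} := (congrFun hsigS σ).symm
    obtain ⟨e1, he1⟩ := exists_equiv_comp (fun i => typeOf G R BR (CR i))
      (fun m => (c m).1) (fun ρ => (hfibR ρ).symm)
    obtain ⟨e2, he2⟩ := exists_equiv_comp (fun j => typeOf G S BS (CS j))
      (fun m => (c m).2) (fun σ => (hfibS σ).symm)
    set π : Fin k ≃ Fin k := e1.trans e2.symm with hπ
    have hπe : ∀ i, e2 (π i) = e1 i := fun i => e2.apply_symm_apply _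
    have hpair : ∀ i, (typeOf G R BR (CR i), typeOf G S BS (CS (π i))) = c (e1 i) := by
      intro i
      have h2 := he2 (π i)
      rw [hπe i] at h2
      exact Prod.ext (he1 i) h2
    set B : Set V := BR ∪ BS with hB
    set D : Fin k → Set V := fun i => CR i ∪ CS (π i) with hD
    have hCRsub : ∀ i, CR i ⊆ R := fun i => by rw [← hUnR]; exact Set.subset_iUnion CR i
    have hCSsub : ∀ j, CS j ⊆ S := fun j => by rw [← hUnS]; exact Set.subset_iUnion CS j
    have hcompat : ∀ i,
        CompatibleTypes G R S (typeOf G R BR (CR i)) (typeOf G S BS (CS (π i))) := by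
      intro i
      have h := hcompat_c (e1 i)
      rw [← hpair i] at h
      exact h
    refine ⟨D, B, ⟨⟨?_, ?_, ?_, ?_, ?_⟩, ?_⟩, ?_⟩
    · show (⋃ i, CR i ∪ CS (π i)) = R ∪ S
      rw [Set.iUnion_union_distrib, hUnR, π.surjective.iUnion_comp fun j => CS j, hUnS]
    · intro i j hij
      show Disjoint (CR i ∪ CS (π i)) (CR j ∪ CS (π j))
      have hc2 : Disjoint (CS (π i)) (CS (π j)) := hDisjS fun h => hij (π.injective h)
      rw [Set.disjoint_union_left]
      constructor
      · rw [Set.disjoint_union_right]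
        exact ⟨hDisjR hij, hRS.mono (hCRsub i) (hCSsub _)⟩
      · rw [Set.disjoint_union_right]
        exact ⟨(hRS.mono (hCRsub j) (hCSsub _)).symm, hc2⟩
    · intro i
      exact ⟨Set.union_subset_union (hCRsub i) (hCSsub _),
        indep_union hRS (hCRsub i) (hCSsub _) (hIndR i).2 (hIndS _).2 (hcompat i)⟩
    · exact Set.union_subset_union hBRsub hBSsub
    · intro i x hx y hy
      have mem : ∀ z ∈ (CR i ∪ CS (π i)) ∩ (BR ∪ BS),
          z ∈ CR i ∩ BR ∨ z ∈ CS (π i) ∩ BS := by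
        rintro z ⟨hz | hz, hb | hb⟩
        · exact Or.inl ⟨hz, hb⟩
        · exact absurd (hBSsub hb) (Set.disjoint_left.mp hRS (hCRsub i hz))
        · exact absurd (hBRsub hb) (Set.disjoint_right.mp hRS (hCSsub _ hz))
        · exact Or.inr ⟨hz, hb⟩
      rcases mem x hx with hx' | hx' <;> rcases mem y hy with hy' | hy'
      · exact hSubR i hx' hy'
      · exact absurd ⟨bit_true.mpr ⟨x, hx'⟩, bit_true.mpr ⟨y, hy'⟩⟩ (hcompat i).1
      · exact absurd ⟨bit_true.mpr ⟨y, hy'⟩, bit_true.mpr ⟨x, hx'⟩⟩ (hcompat i).1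
      · exact hSubS _ hx' hy'
    · intro i
      exact valid_union hRS (hCRsub i) (hCSsub _) hBRsub hBSsub (hcompat i)
        (hValR i) (hValS _)
    · funext τ
      have hmt : ∀ i, typeOf G (R ∪ S) B (D i) =
          mergeType G R S (c (e1 i)).1 (c (e1 i)).2 := by
        intro i
        rw [← hpair i]
        exact merge_typeOf hRS (hCRsub i) (hCSsub _) hBRsub hBSsub
      calc sigOf G (R ∪ S) D B τ
          = Nat.card {i : Fin k // mergeType G R S (c (e1 i)).1 (c (e1 i)).2 = τ} :=
            Nat.card_congr (Equiv.subtypeEquivRight fun i => by rw [hmt i])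
        _ = Nat.card {m : Fin k // mergeType G R S (c m).1 (c m).2 = τ} :=
            Nat.card_congr (Equiv.subtypeEquiv e1 fun i => Iff.rfl)
        _ = ∑ᶠ p ∈ {p : UType G R × UType G S | mergeType G R S p.1 p.2 = τ},
              Nat.card {m : Fin k // c m = p} :=
            (card_fiber_sum c (fun p => mergeType G R S p.1 p.2) τ).symm
        _ = ∑ᶠ p ∈ {p : UType G R × UType G S | mergeType G R S p.1 p.2 = τ}, f p :=
            finsum_mem_congr rfl fun p _ => hcard_c p
        _ = σT τ := hfT τ

end BCol
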